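/- arXiv:2112.04219 — 2 statements merged into one kernel-verified Lean document; each statement's English description precedes it below -/
import Mathlib

section
/- Under the hypotheses of the previous statement, the map from disturbance sequences to state trajectories is Lipschitz in the ℓ² norm: ‖x − x'‖_{ℓ²} ≤ (L/(1−λ))·‖d − d'‖_{ℓ²}, where x_0 = x'_0 and ‖x‖_{ℓ²}² = ∑_{t≥0}|x_t|². -/
/-- The disturbance-to-state map of a contracting system is Lipschitz in the
ℓ² norm with constant `L / (1 - λ)`. -/
theorem stmt_8
    {X D : Type*} [NormedAddCommGroup X] [NormedAddCommGroup D]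
    (F : X → D → X) (lam L : ℝ)
    (hlam0 : 0 < lam) (hlam1 : lam < 1) (hL : 0 ≤ L)
    (hcontr : ∀ x x' d, ‖F x d - F x' d‖ ≤ lam * ‖x - x'‖)
    (hlip : ∀ x d d', ‖F x d - F x d'‖ ≤ L * ‖d - d'‖)
    (x x' : ℕ → X) (d d' : ℕ → D)
    (hx : ∀ t, x (t + 1) = F (x t) (d t))
    (hx' : ∀ t, x' (t + 1) = F (x' t) (d' t))
    (h0 : x 0 = x' 0)
    (hd : Summable (fun t : ℕ => ‖d t - d' t‖ ^ 2)) :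
    Summable (fun t : ℕ => ‖x t - x' t‖ ^ 2) ∧
    Real.sqrt (∑' t : ℕ, ‖x t - x' t‖ ^ 2) ≤
      (L / (1 - lam)) * Real.sqrt (∑' t : ℕ, ‖d t - d' t‖ ^ 2) := by
  set e : ℕ → ℝ := fun t => ‖x t - x' t‖ with he
  set u : ℕ → ℝ := fun t => ‖d t - d' t‖ with hu
  have h1lam : (0:ℝ) < 1 - lam := by linarith
  have he0 : e 0 = 0 := by simp [he, h0]
  have henn : ∀ t, 0 ≤ e t := fun t => norm_nonneg _
  have hunn : ∀ t, 0 ≤ u t := fun t => norm_nonneg _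
  have hrec : ∀ t, e (t + 1) ≤ lam * e t + L * u t := by
    intro t
    have : x (t + 1) - x' (t + 1) =
        (F (x t) (d t) - F (x' t) (d t)) + (F (x' t) (d t) - F (x' t) (d' t)) := by
      rw [hx, hx']; abel
    calc e (t + 1) = ‖(F (x t) (d t) - F (x' t) (d t)) +
          (F (x' t) (d t) - F (x' t) (d' t))‖ := by rw [he]; simp only; rw [this]
      _ ≤ ‖F (x t) (d t) - F (x' t) (d t)‖ + ‖F (x' t) (d t) - F (x' t) (d' t)‖ :=
          norm_add_le _ _
      _ ≤ lam * e t + L * u t := add_le_add (hcontr _ _ _) (hlip _ _ _)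
  have hsq : ∀ t, e (t + 1) ^ 2 ≤ lam * e t ^ 2 + (L ^ 2 / (1 - lam)) * u t ^ 2 := by
    intro t
    have h1 : e (t + 1) ^ 2 ≤ (lam * e t + L * u t) ^ 2 := by
      apply pow_le_pow_left₀ (henn _) (hrec t)
    have h2 : (lam * e t + L * u t) ^ 2 ≤ lam * e t ^ 2 + (L ^ 2 / (1 - lam)) * u t ^ 2 := by
      have hdiv : L ^ 2 / (1 - lam) * (1 - lam) = L ^ 2 := div_mul_cancel₀ _ h1lam.ne'
      nlinarith [mul_nonneg hlam0.le (sq_nonneg ((1 - lam) * e t - L * u t)),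
        henn t, hunn t, h1lam, sq_nonneg (e t), sq_nonneg (u t)]
    linarith
  set U := ∑' t : ℕ, u t ^ 2 with hU
  have hUnn : 0 ≤ U := tsum_nonneg fun t => sq_nonneg _
  have hupart : ∀ n, ∑ t ∈ Finset.range n, u t ^ 2 ≤ U :=
    fun n => Summable.sum_le_tsum _ (fun t _ => sq_nonneg _) hd
  have hbound : ∀ n, ∑ t ∈ Finset.range n, e t ^ 2 ≤ (L / (1 - lam)) ^ 2 * U := by
    intro n
    have key : ∀ m, ∑ t ∈ Finset.range m, e t ^ 2 ≤
        lam * ∑ t ∈ Finset.range m, e t ^ 2 + (L ^ 2 / (1 - lam)) * U := by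
      intro m
      cases m with
      | zero => simp; positivity
      | succ k =>
        have hshift : ∑ t ∈ Finset.range (k + 1), e t ^ 2 =
            (∑ t ∈ Finset.range k, e (t + 1) ^ 2) + e 0 ^ 2 :=
          Finset.sum_range_succ' _ _
        have hmono : ∑ t ∈ Finset.range k, e t ^ 2 ≤
            ∑ t ∈ Finset.range (k + 1), e t ^ 2 := by
          rw [Finset.sum_range_succ]; nlinarith [sq_nonneg (e k)]
        calc ∑ t ∈ Finset.range (k + 1), e t ^ 2
            = (∑ t ∈ Finset.range k, e (t + 1) ^ 2) + e 0 ^ 2 := hshift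
          _ = ∑ t ∈ Finset.range k, e (t + 1) ^ 2 := by rw [he0]; ring
          _ ≤ ∑ t ∈ Finset.range k, (lam * e t ^ 2 + (L ^ 2 / (1 - lam)) * u t ^ 2) :=
              Finset.sum_le_sum fun t _ => hsq t
          _ = lam * (∑ t ∈ Finset.range k, e t ^ 2)
              + (L ^ 2 / (1 - lam)) * ∑ t ∈ Finset.range k, u t ^ 2 := by
              rw [Finset.sum_add_distrib, Finset.mul_sum, Finset.mul_sum]
          _ ≤ lam * (∑ t ∈ Finset.range (k + 1), e t ^ 2)
              + (L ^ 2 / (1 - lam)) * U :=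
              add_le_add (mul_le_mul_of_nonneg_left hmono hlam0.le)
                (mul_le_mul_of_nonneg_left (hupart k) (by positivity))
    have h := key n
    calc ∑ t ∈ Finset.range n, e t ^ 2 ≤ (L ^ 2 / (1 - lam)) * U / (1 - lam) := by
          rw [le_div_iff₀ h1lam]; nlinarith
      _ = (L / (1 - lam)) ^ 2 * U := by ring
  have hsum : Summable (fun t : ℕ => e t ^ 2) :=
    summable_of_sum_range_le (fun t => sq_nonneg _) hbound
  refine ⟨hsum, ?_⟩
  have htsum : ∑' t : ℕ, e t ^ 2 ≤ (L / (1 - lam)) ^ 2 * U :=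
    Summable.tsum_le_of_sum_range_le hsum hbound
  have hcnn : 0 ≤ L / (1 - lam) := div_nonneg hL h1lam.le
  calc Real.sqrt (∑' t : ℕ, e t ^ 2) ≤ Real.sqrt ((L / (1 - lam)) ^ 2 * U) :=
        Real.sqrt_le_sqrt htsum
    _ = (L / (1 - lam)) * Real.sqrt U := by
        rw [Real.sqrt_mul (sq_nonneg _), Real.sqrt_sq hcnn]
end

section
/- Let D₁₁ ∈ ℝ^{q×q} satisfy 2Λ − Λ D₁₁ − D₁₁ᵀ Λ ≻ 0 for some positive diagonal matrix Λ, and let σ : ℝ → ℝ be slope-restricted in [0,1]. Then for every b ∈ ℝ^q the equation w = σ(D₁₁ w + b) has at most one solution w. -/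
lemma sec_aux (σ : ℝ → ℝ)
    (hσ : ∀ a b : ℝ, a ≠ b →
      0 ≤ (σ a - σ b) / (a - b) ∧ (σ a - σ b) / (a - b) ≤ 1)
    (a b : ℝ) : 0 ≤ (σ a - σ b) * ((a - b) - (σ a - σ b)) := by
  rcases eq_or_ne a b with h | h
  · simp [h]
  · obtain ⟨h1, h2⟩ := hσ a b h
    have hd : a - b ≠ 0 := sub_ne_zero.mpr h
    have hval : σ a - σ b = ((σ a - σ b) / (a - b)) * (a - b) :=
      (div_mul_cancel₀ _ hd).symm
    set s := (σ a - σ b) / (a - b) with hs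
    rw [hval]
    nlinarith [mul_nonneg (mul_nonneg h1 (sub_nonneg.mpr h2)) (sq_nonneg (a - b))]

/-- Uniqueness of equilibrium network solutions under the LMI condition
`2Λ − Λ D₁₁ − D₁₁.transpose Λ ≻ 0`. -/
theorem stmt_13
    (q : ℕ) (D₁₁ : Matrix (Fin q) (Fin q) ℝ)
    (lamv : Fin q → ℝ) (hlam : ∀ i, 0 < lamv i)
    (hpos : ((2 : ℝ) • Matrix.diagonal lamv - Matrix.diagonal lamv * D₁₁ -
      D₁₁.transpose * Matrix.diagonal lamv).PosDef)
    (σ : ℝ → ℝ)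
    (hσ : ∀ a b : ℝ, a ≠ b →
      0 ≤ (σ a - σ b) / (a - b) ∧ (σ a - σ b) / (a - b) ≤ 1) :
    ∀ (b : Fin q → ℝ) (w w' : Fin q → ℝ),
      (∀ i, w i = σ (D₁₁.mulVec w i + b i)) →
      (∀ i, w' i = σ (D₁₁.mulVec w' i + b i)) →
      w = w' := by
  intro b w w' hw hw'
  by_contra hne
  set Δ : Fin q → ℝ := w - w' with hΔ
  have hΔne : Δ ≠ 0 := sub_ne_zero.mpr hne
  have hpd := hpos.dotProduct_mulVec_pos hΔne
  set u : Fin q → ℝ := D₁₁.mulVec Δ with hu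
  have huw : ∀ i, u i = D₁₁.mulVec w i - D₁₁.mulVec w' i := by
    intro i
    simp [hu, hΔ, Matrix.mulVec_sub]
  -- sector inequality per coordinate
  have hsec : ∀ i, 0 ≤ lamv i * (Δ i * (u i - Δ i)) := by
    intro i
    apply mul_nonneg (hlam i).le
    have h := sec_aux σ hσ (D₁₁.mulVec w i + b i) (D₁₁.mulVec w' i + b i)
    have hΔi : Δ i = σ (D₁₁.mulVec w i + b i) - σ (D₁₁.mulVec w' i + b i) := by
      simp [hΔ, hw i, hw' i]
    have hui : u i = (D₁₁.mulVec w i + b i) - (D₁₁.mulVec w' i + b i) := by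
      rw [huw i]; ring
    rw [hΔi, hui]
    linarith [h]
  -- compute the quadratic form
  have hform : dotProduct (star Δ) ((((2 : ℝ) • Matrix.diagonal lamv -
      Matrix.diagonal lamv * D₁₁ -
      D₁₁.transpose * Matrix.diagonal lamv)).mulVec Δ)
      = -2 * ∑ i, lamv i * (Δ i * (u i - Δ i)) := by
    have h3 : dotProduct Δ ((D₁₁.transpose * Matrix.diagonal lamv).mulVec Δ)
        = dotProduct u ((Matrix.diagonal lamv).mulVec Δ) := by
      rw [← Matrix.mulVec_mulVec, Matrix.dotProduct_mulVec, Matrix.vecMul_transpose, ← hu]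
    simp only [star_trivial, Matrix.sub_mulVec, dotProduct_sub,
      Matrix.smul_mulVec, dotProduct_smul]
    rw [h3, ← Matrix.mulVec_mulVec, ← hu]
    simp only [dotProduct, Matrix.mulVec_diagonal, smul_eq_mul,
      Finset.mul_sum, ← Finset.sum_sub_distrib]
    apply Finset.sum_congr rfl
    intro i _
    ring
  rw [hform] at hpd
  have hsum : 0 ≤ ∑ i, lamv i * (Δ i * (u i - Δ i)) :=
    Finset.sum_nonneg fun i _ => hsec i
  linarith
end
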